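/- Let T : H → 2^H be a maximally ρ-comonotone operator. If (z_k) and (u_k) are sequences in H with u_k ∈ T(z_k) for every k, u_k → u strongly (in norm), and z_k ⇀ z weakly, then u ∈ T(z). -/

import Mathlib

open RealInnerProductSpace Filter

/-- The graph of a maximally `ρ`-comonotone operator is closed under
strong convergence in the values and weak convergence in the arguments. -/
theorem maximally_comonotone_graph_closed
    {H : Type*} [NormedAddCommGroup H] [InnerProductSpace ℝ H] [CompleteSpace H]
    (ρ : ℝ) (T : H → Set H)
    (hcomono : ∀ x y u v : H, u ∈ T x → v ∈ T y →
      ρ * ‖u - v‖^2 ≤ ⟪u - v, x - y⟫)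
    (hmax : ∀ x u : H, (∀ y v : H, v ∈ T y → ρ * ‖u - v‖^2 ≤ ⟪u - v, x - y⟫) →
      u ∈ T x)
    (z v : ℕ → H) (zlim u : H)
    (hmem : ∀ k : ℕ, v k ∈ T (z k))
    (hstrong : Tendsto v atTop (nhds u))
    (hweak : ∀ y : H, Tendsto (fun k : ℕ => ⟪z k, y⟫) atTop (nhds ⟪zlim, y⟫)) :
    u ∈ T zlim := by
  apply hmax
  intro y w hw
  -- uniform bound on ‖z k‖ via Banach–Steinhaus
  obtain ⟨C, hC⟩ : ∃ C, ∀ k, ‖(innerSL ℝ (z k) : H →L[ℝ] ℝ)‖ ≤ C := by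
    apply banach_steinhaus
    intro x
    obtain ⟨C, hC⟩ := ((hweak x).norm).bddAbove_range
    exact ⟨C, fun k => hC ⟨k, rfl⟩⟩
  have hzbound : ∀ k, ‖z k‖ ≤ C := by
    intro k
    have := hC k
    rwa [innerSL_apply_norm] at this
  -- first term tends to 0
  have h1 : Tendsto (fun k => ⟪v k - u, z k - y⟫) atTop (nhds 0) := by
    have hnorm : Tendsto (fun k => ‖v k - u‖ * (C + ‖y‖)) atTop (nhds 0) := by
      have := ((hstrong.sub_const u).norm).mul_const (C + ‖y‖)
      simpa using this
    apply squeeze_zero_norm _ hnorm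
    intro k
    calc ‖⟪v k - u, z k - y⟫‖ ≤ ‖v k - u‖ * ‖z k - y‖ := by
          exact (abs_real_inner_le_norm _ _)
      _ ≤ ‖v k - u‖ * (C + ‖y‖) := by
          apply mul_le_mul_of_nonneg_left _ (norm_nonneg _)
          exact (norm_sub_le _ _).trans (add_le_add (hzbound k) le_rfl)
  -- second term tends to ⟪u - w, zlim - y⟫
  have h2 : Tendsto (fun k => ⟪u - w, z k - y⟫) atTop (nhds ⟪u - w, zlim - y⟫) := by
    have heq : ∀ x : H, ⟪u - w, x - y⟫ = ⟪x, u - w⟫ - ⟪u - w, y⟫ := by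
      intro x
      rw [inner_sub_right, real_inner_comm]
    simp only [heq]
    exact (hweak (u - w)).sub_const _
  -- combine
  have hrhs : Tendsto (fun k => ⟪v k - w, z k - y⟫) atTop (nhds ⟪u - w, zlim - y⟫) := by
    have : (fun k => ⟪v k - w, z k - y⟫)
        = fun k => ⟪v k - u, z k - y⟫ + ⟪u - w, z k - y⟫ := by
      funext k
      rw [← inner_add_left]
      congr 1
      abel
    rw [this]
    simpa using h1.add h2
  have hlhs : Tendsto (fun k => ρ * ‖v k - w‖^2) atTop (nhds (ρ * ‖u - w‖^2)) :=
    (((hstrong.sub_const w).norm).pow 2).const_mul ρ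
  exact le_of_tendsto_of_tendsto' hlhs hrhs fun k =>
    hcomono (z k) y (v k) w (hmem k) hw
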